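/- Let d ≥ 2 and n ≥ 2, let K be a convex body in ℝ^d, and let 𝒦 = {x_i + τ_i K : i = 1, …, n} (with all τ_i > 0) be a non-separable family of positive homothetic copies of K. Then ⋃𝒦 can be covered by a translate of ((d+1)/2)(∑_{i=1}^n τ_i) K. -/

import Mathlib

open Set Metric Pointwise
open scoped RealInnerProductSpace

/-- A finite family of sets in `ℝ^d` is non-separable (an NS-family) if no
hyperplane disjoint from the union strictly separates some members from all
the remaining members. -/
def NonSeparableFamily {d n : ℕ} (F : Fin n → Set (EuclideanSpace ℝ (Fin d))) : Prop :=
  ¬ (∃ (I : Finset (Fin n)) (u : EuclideanSpace ℝ (Fin d)) (α : ℝ),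
      I.Nonempty ∧ I ≠ Finset.univ ∧ u ≠ 0 ∧
      (∀ i ∈ I, ∀ y ∈ F i, ⟪u, y⟫ < α) ∧
      (∀ i ∉ I, ∀ y ∈ F i, α < ⟪u, y⟫))

-- charging lemma
lemma charge {n : ℕ} (b w : Fin n → ℝ) (hw : ∀ j, 0 ≤ w j) (M : ℝ) (hbM : ∀ i, b i ≤ M)
    (cov : ∀ i, ∀ α : ℝ, b i < α → α < M → ∃ j, α ≤ b j ∧ b j - w j ≤ α) :
    ∀ i, M - b i ≤ ∑ j ∈ Finset.univ.filter (fun j => b i < b j), w j := by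
  suffices H : ∀ k : ℕ, ∀ i, (Finset.univ.filter (fun j => b i < b j)).card ≤ k →
      M - b i ≤ ∑ j ∈ Finset.univ.filter (fun j => b i < b j), w j by
    exact fun i => H _ i le_rfl
  intro k
  induction k with
  | zero =>
    intro i hcard
    have hfe : Finset.univ.filter (fun j => b i < b j) = ∅ := Finset.card_eq_zero.mp (Nat.le_zero.mp hcard)
    rw [hfe]
    simp only [Finset.sum_empty]
    by_contra h
    push_neg at h
    have hbiM : b i < M := by linarith
    obtain ⟨j, hj1, hj2⟩ := cov i ((b i + M)/2) (by linarith) (by linarith)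
    have : j ∈ Finset.univ.filter (fun j => b i < b j) := by
      simp only [Finset.mem_filter, Finset.mem_univ, true_and]; linarith
    rw [hfe] at this; exact absurd this (Finset.notMem_empty j)
  | succ k ih =>
    intro i hcard
    have hsumnn : (0:ℝ) ≤ ∑ j ∈ Finset.univ.filter (fun j => b i < b j), w j :=
      Finset.sum_nonneg (fun j _ => hw j)
    rcases le_or_gt M (b i) with h | h
    · linarith
    refine le_of_forall_pos_le_add fun ε hε => ?_
    rcases le_or_gt (M - b i) ε with he | he
    · linarith
    have hmin : 0 < min ε ((M - b i)/2) := lt_min hε (by linarith)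
    have hmr : min ε ((M - b i)/2) ≤ (M - b i)/2 := min_le_right _ _
    obtain ⟨j, hj1, hj2⟩ := cov i (b i + min ε ((M - b i)/2)) (by linarith) (by linarith)
    have hbij : b i < b j := by linarith
    have hjmem : j ∈ Finset.univ.filter (fun l => b i < b l) := by
      simp only [Finset.mem_filter, Finset.mem_univ, true_and]; exact hbij
    have hsub : insert j (Finset.univ.filter (fun l => b j < b l)) ⊆
        Finset.univ.filter (fun l => b i < b l) := by
      intro l hl
      rcases Finset.mem_insert.mp hl with rfl | hl
      · exact hjmem
      · simp only [Finset.mem_filter, Finset.mem_univ, true_and] at hl ⊢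
        linarith
    have hjnot : j ∉ Finset.univ.filter (fun l => b j < b l) := by
      simp only [Finset.mem_filter, Finset.mem_univ, true_and]; exact lt_irrefl _
    have hcard2 : (Finset.univ.filter (fun l => b j < b l)).card ≤ k := by
      have h1 : (insert j (Finset.univ.filter (fun l => b j < b l))).card ≤ k + 1 :=
        le_trans (Finset.card_le_card hsub) hcard
      rw [Finset.card_insert_of_notMem hjnot] at h1
      omega
    have hIH := ih j hcard2
    have hsum2 : ∑ l ∈ insert j (Finset.univ.filter (fun l => b j < b l)), w l ≤
        ∑ l ∈ Finset.univ.filter (fun l => b i < b l), w l :=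
      Finset.sum_le_sum_of_subset_of_nonneg hsub (fun l _ _ => hw l)
    rw [Finset.sum_insert hjnot] at hsum2
    have hml : min ε ((M - b i)/2) ≤ ε := min_le_left _ _
    -- M - b i = (M - b j) + (b j - α) + (α - b i)
    have : M - b j ≤ ∑ l ∈ Finset.univ.filter (fun l => b j < b l), w l := hIH
    linarith

lemma pairsum {n : ℕ} (b τ : Fin n → ℝ) (hτ : ∀ i, 0 ≤ τ i) :
    ∑ i, τ i * ∑ j ∈ Finset.univ.filter (fun j => b i < b j), τ j ≤
      ((∑ i, τ i)^2 - ∑ i, (τ i)^2)/2 := by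
  have hLHS : ∑ i, τ i * ∑ j ∈ Finset.univ.filter (fun j => b i < b j), τ j
      = ∑ i, ∑ j, if b i < b j then τ i * τ j else 0 := by
    refine Finset.sum_congr rfl fun i _ => ?_
    rw [Finset.sum_filter, Finset.mul_sum]
    exact Finset.sum_congr rfl fun j _ => by split_ifs <;> simp
  have hswap : ∑ i, ∑ j, (if b i < b j then τ i * τ j else 0)
      = ∑ i, ∑ j, (if b j < b i then τ i * τ j else 0) := by
    rw [Finset.sum_comm]
    refine Finset.sum_congr rfl fun i _ => Finset.sum_congr rfl fun j _ => by
      rw [mul_comm]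
  have hbound : (∑ i, ∑ j, if b i < b j then τ i * τ j else 0)
      + (∑ i, ∑ j, if b j < b i then τ i * τ j else 0)
      ≤ ∑ i, ∑ j, if i = j then 0 else τ i * τ j := by
    rw [← Finset.sum_add_distrib]
    refine Finset.sum_le_sum fun i _ => ?_
    rw [← Finset.sum_add_distrib]
    refine Finset.sum_le_sum fun j _ => ?_
    have hnn := mul_nonneg (hτ i) (hτ j)
    rcases eq_or_ne i j with rfl | hij
    · simp [lt_irrefl]
    · simp only [hij, if_false]
      split_ifs <;> linarith
  have hB : ∑ i, ∑ j, (if i = j then 0 else τ i * τ j)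
      = (∑ i, τ i)^2 - ∑ i, (τ i)^2 := by
    have h1 : ∀ i : Fin n, ∑ j, (if i = j then 0 else τ i * τ j)
        = τ i * (∑ j, τ j) - (τ i)^2 := by
      intro i
      have : ∑ j, (if i = j then 0 else τ i * τ j)
          = ∑ j, (τ i * τ j - if i = j then τ i * τ j else 0) := by
        refine Finset.sum_congr rfl fun j _ => by split_ifs <;> ring
      rw [this, Finset.sum_sub_distrib, Finset.sum_ite_eq, ← Finset.mul_sum]
      simp [pow_two]
    rw [Finset.sum_congr rfl fun i _ => h1 i, Finset.sum_sub_distrib, ← Finset.sum_mul,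
      pow_two]
  linarith [hLHS, hswap, hbound, hB]

lemma center_exists {d : ℕ} (hd : 1 ≤ d) {K : Set (EuclideanSpace ℝ (Fin d))}
    (hKconv : Convex ℝ K) (hKcpt : IsCompact K) (hne : K.Nonempty) :
    ∃ c ∈ K, ∀ x ∈ K, ((d : ℝ) + 1) • c - x ∈ (d : ℝ) • K := by
  classical
  have hd0 : (0:ℝ) < (d:ℝ) := by exact_mod_cast Nat.lt_of_lt_of_le Nat.zero_lt_one hd
  have hd1 : (0:ℝ) < (d:ℝ) + 1 := by linarith
  have harr : ∀ (a z : EuclideanSpace ℝ (Fin d)), -a +ᵥ z = z - a := by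
    intro a z
    rw [vadd_eq_add]
    abel
  set C : K → Set (EuclideanSpace ℝ (Fin d)) :=
    fun x => ((d:ℝ)+1)⁻¹ • ((x : EuclideanSpace ℝ (Fin d)) +ᵥ (d:ℝ) • K) with hC
  have hmem : ∀ (x : K) (y : EuclideanSpace ℝ (Fin d)),
      y ∈ C x ↔ ((d:ℝ)+1) • y - (x : EuclideanSpace ℝ (Fin d)) ∈ (d:ℝ) • K := by
    intro x y
    simp only [hC]
    rw [Set.mem_inv_smul_set_iff₀ (ne_of_gt hd1), Set.mem_vadd_set_iff_neg_vadd_mem, harr]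
  have hconv : ∀ x : K, Convex ℝ (C x) := fun x => by
    simp only [hC]
    exact ((hKconv.smul _).vadd _).smul _
  have hcpt : ∀ x : K, IsCompact (C x) := by
    intro x
    simp only [hC]
    have h1 : IsCompact ((d:ℝ) • K) := by
      rw [← Set.image_smul]
      exact hKcpt.image (continuous_const_smul _)
    have h2 : IsCompact ((x : EuclideanSpace ℝ (Fin d)) +ᵥ (d:ℝ) • K) := by
      rw [← Set.image_vadd]
      exact h1.image (continuous_const_vadd _)
    rw [← Set.image_smul]
    exact h2.image (continuous_const_smul _)
  have hinter : ∀ I : Finset K,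
      I.card ≤ Module.finrank ℝ (EuclideanSpace ℝ (Fin d)) + 1 → (⋂ i ∈ I, C i).Nonempty := by
    intro I hIcard
    rcases I.eq_empty_or_nonempty with rfl | hIne
    · simp
    have hm0 : 0 < I.card := Finset.card_pos.mpr hIne
    have hmR : (0:ℝ) < (I.card : ℝ) := by exact_mod_cast hm0
    have hfr : Module.finrank ℝ (EuclideanSpace ℝ (Fin d)) = d := finrank_euclideanSpace_fin
    have hmd : (I.card : ℝ) ≤ (d:ℝ) + 1 := by
      rw [hfr] at hIcard
      exact_mod_cast hIcard
    refine ⟨((I.card : ℝ))⁻¹ • ∑ i ∈ I, (i : EuclideanSpace ℝ (Fin d)),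
      Set.mem_iInter₂.mpr fun x₀ hx₀ => ?_⟩
    rw [hmem]
    set w : K → ℝ := fun i => ((d:ℝ)+1)/((d:ℝ)*(I.card : ℝ)) - (if i = x₀ then ((d:ℝ))⁻¹ else 0)
      with hw
    have hwnn : ∀ i ∈ I, 0 ≤ w i := by
      intro i _
      rw [hw]
      dsimp only
      split_ifs with h
      · rw [div_sub' (ne_of_gt (by positivity : (0:ℝ) < (d:ℝ)*(I.card:ℝ)))]
        apply div_nonneg _ (by positivity)
        have hinv : (d:ℝ) * (I.card : ℝ) * ((d:ℝ))⁻¹ = (I.card : ℝ) := by field_simp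
        linarith
      · simp only [sub_zero]
        positivity
    have hwsum : ∑ i ∈ I, w i = 1 := by
      rw [hw]
      dsimp only
      rw [Finset.sum_sub_distrib]
      rw [Finset.sum_ite_eq' I x₀ (fun _ => ((d:ℝ))⁻¹)]
      simp only [hx₀, if_true, Finset.sum_const, nsmul_eq_mul]
      field_simp
      ring
    have hkK : (∑ i ∈ I, w i • (i : EuclideanSpace ℝ (Fin d))) ∈ K :=
      hKconv.sum_mem hwnn hwsum (fun i _ => i.2)
    have heq : ((d:ℝ)+1) • (((I.card : ℝ))⁻¹ • ∑ i ∈ I, (i : EuclideanSpace ℝ (Fin d)))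
        - (x₀ : EuclideanSpace ℝ (Fin d))
        = (d:ℝ) • (∑ i ∈ I, w i • (i : EuclideanSpace ℝ (Fin d))) := by
      have h1 : ∀ i ∈ I, ((d:ℝ)+1) • (((I.card : ℝ))⁻¹ • (i : EuclideanSpace ℝ (Fin d)))
          = (((d:ℝ)+1) * ((I.card : ℝ))⁻¹) • (i : EuclideanSpace ℝ (Fin d)) :=
        fun i _ => smul_smul _ _ _
      have hterm : ∀ i ∈ I, (d:ℝ) • (w i • (i : EuclideanSpace ℝ (Fin d)))
          = (((d:ℝ)+1) * ((I.card : ℝ))⁻¹) • (i : EuclideanSpace ℝ (Fin d))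
            - (if i = x₀ then (i : EuclideanSpace ℝ (Fin d)) else 0) := by
        intro i _
        rw [hw]
        dsimp only
        rw [smul_smul, mul_sub, sub_smul]
        have hsc : (d:ℝ) * (((d:ℝ)+1)/((d:ℝ)*(I.card:ℝ))) = ((d:ℝ)+1) * ((I.card:ℝ))⁻¹ := by
          field_simp
        rw [hsc, mul_ite, mul_inv_cancel₀ (ne_of_gt hd0), mul_zero, ite_smul, one_smul,
          zero_smul]
      rw [Finset.smul_sum, Finset.smul_sum, Finset.smul_sum]
      rw [Finset.sum_congr rfl hterm, Finset.sum_sub_distrib]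
      rw [Finset.sum_ite_eq' I x₀ (fun i => (i : EuclideanSpace ℝ (Fin d)))]
      rw [Finset.sum_congr rfl h1]
      simp only [hx₀, if_true]
    rw [heq]
    exact smul_mem_smul_set hkK
  obtain ⟨c, hc⟩ := Convex.helly_theorem_compact' (𝕜 := ℝ) hconv hcpt hinter
  have hcall : ∀ x ∈ K, ((d:ℝ)+1) • c - x ∈ (d:ℝ) • K := by
    intro x hx
    have := Set.mem_iInter.mp hc ⟨x, hx⟩
    rwa [hmem] at this
  refine ⟨c, ?_, hcall⟩
  obtain ⟨x₁, hx₁⟩ := hne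
  obtain ⟨k', hk'K, hk'⟩ := hcall x₁ hx₁
  have hceq : c = ((((d:ℝ)+1)⁻¹ * (d:ℝ))) • k' + (((d:ℝ)+1)⁻¹) • x₁ := by
    have hk'' : (d:ℝ) • k' = ((d:ℝ)+1) • c - x₁ := by
      dsimp only at hk'
      exact hk'
    have h2 : ((d:ℝ)+1) • c = (d:ℝ) • k' + x₁ := by
      rw [hk'']; abel
    have h3 := congrArg (fun v : EuclideanSpace ℝ (Fin d) => (((d:ℝ)+1)⁻¹ : ℝ) • v) h2
    simp only [smul_smul, inv_mul_cancel₀ (ne_of_gt hd1), one_smul] at h3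
    rw [h3, smul_add, smul_smul]
  rw [hceq]
  have hsum1 : (((d:ℝ)+1)⁻¹ * (d:ℝ)) + (((d:ℝ)+1)⁻¹) = 1 := by
    field_simp
  exact hKconv hk'K hx₁ (by positivity) (by positivity) hsum1

section Main
variable {d n : ℕ}

set_option maxHeartbeats 1000000 in
theorem stmt_6_aux (hd : 2 ≤ d) (hn : 2 ≤ n)
    (K : Set (EuclideanSpace ℝ (Fin d)))
    (hKconv : Convex ℝ K) (hKcpt : IsCompact K) (hKint : (interior K).Nonempty)
    (x : Fin n → EuclideanSpace ℝ (Fin d)) (τ : Fin n → ℝ) (hτ : ∀ i, 0 < τ i)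
    (hns : NonSeparableFamily (fun i => x i +ᵥ τ i • K)) :
    ∃ t : EuclideanSpace ℝ (Fin d),
      (⋃ i, x i +ᵥ τ i • K) ⊆ t +ᵥ ((((d : ℝ) + 1) / 2) * ∑ i, τ i) • K := by
  classical
  have hKne : K.Nonempty := hKint.mono interior_subset
  -- the Minkowski center of K
  obtain ⟨c, hcK, hc⟩ := center_exists (le_trans one_le_two hd) hKconv hKcpt hKne
  set T : ℝ := ∑ i, τ i with hT
  have hT0 : 0 < T := Finset.sum_pos (fun i _ => hτ i) ⟨⟨0, by omega⟩, Finset.mem_univ _⟩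
  set Q : ℝ := ∑ i, (τ i)^2 with hQ
  have hQ0 : 0 ≤ Q := Finset.sum_nonneg fun i _ => sq_nonneg _
  have hQT : Q ≤ T^2 := by
    have h1 : ∀ i : Fin n, τ i ≤ T :=
      fun i => Finset.single_le_sum (fun j _ => (hτ j).le) (Finset.mem_univ i)
    have h2 : ∀ i : Fin n, (τ i)^2 ≤ τ i * T := by
      intro i
      rw [pow_two]
      exact mul_le_mul_of_nonneg_left (h1 i) (hτ i).le
    calc Q ≤ ∑ i, τ i * T := Finset.sum_le_sum fun i _ => h2 i
      _ = T^2 := by rw [← Finset.sum_mul, pow_two]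
  set lam : ℝ := ((d:ℝ)+1)/2 with hlam
  have hd2 : (2:ℝ) ≤ (d:ℝ) := by exact_mod_cast hd
  have hlam1 : 1 ≤ lam := by rw [hlam]; linarith
  have hdlam : (1:ℝ) + (d:ℝ) = 2 * lam := by rw [hlam]; ring
  clear_value T Q lam
  -- support extremizers
  have hmax : ∀ u : EuclideanSpace ℝ (Fin d), ∃ kk, kk ∈ K ∧ ∀ k ∈ K, ⟪u, k⟫ ≤ ⟪u, kk⟫ := by
    intro u
    obtain ⟨kk, hkk, hbig⟩ := hKcpt.exists_isMaxOn (f := fun k => (⟪u, k⟫ : ℝ)) hKne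
      ((continuous_const.inner continuous_id).continuousOn)
    exact ⟨kk, hkk, fun k hk => hbig hk⟩
  have hminn : ∀ u : EuclideanSpace ℝ (Fin d), ∃ kk, kk ∈ K ∧ ∀ k ∈ K, ⟪u, kk⟫ ≤ ⟪u, k⟫ := by
    intro u
    obtain ⟨kk, hkk, hsm⟩ := hKcpt.exists_isMinOn (f := fun k => (⟪u, k⟫ : ℝ)) hKne
      ((continuous_const.inner continuous_id).continuousOn)
    exact ⟨kk, hkk, fun k hk => hsm hk⟩
  choose kM hkMK hkMmax using hmax
  choose km hkmK hkmmin using hminn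
  set S : EuclideanSpace ℝ (Fin d) → ℝ := fun u => ⟪u, kM u⟫ with hS
  set Sm : EuclideanSpace ℝ (Fin d) → ℝ := fun u => ⟪u, km u⟫ with hSm
  have hcle : ∀ u, ⟪u, c⟫ ≤ S u := fun u => hkMmax u c hcK
  have hcge : ∀ u, Sm u ≤ ⟪u, c⟫ := fun u => hkmmin u c hcK
  have hSSm : ∀ u, Sm u ≤ S u := fun u => le_trans (hcge u) (hcle u)
  -- the Minkowski-centering inequality
  have hcen : ∀ u, ⟪u, c⟫ - Sm u ≤ (d:ℝ) * (S u - ⟪u, c⟫) := by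
    intro u
    obtain ⟨k, hkK2, hkk⟩ := hc (km u) (hkmK u)
    dsimp only at hkk
    have h1 : ⟪u, ((d:ℝ)+1) • c - km u⟫ = ((d:ℝ)+1) * ⟪u, c⟫ - Sm u := by
      rw [inner_sub_right, real_inner_smul_right]
    have h2 : ⟪u, ((d:ℝ)+1) • c - km u⟫ ≤ (d:ℝ) * S u := by
      rw [← hkk, real_inner_smul_right]
      have := hkMmax u k hkK2
      nlinarith [this, (by positivity : (0:ℝ) ≤ (d:ℝ))]
    rw [h1] at h2
    linarith
  -- bounds for points of the bodies
  have hyub : ∀ (u : EuclideanSpace ℝ (Fin d)) (j : Fin n) (y : EuclideanSpace ℝ (Fin d)),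
      y ∈ x j +ᵥ τ j • K → ⟪u, y⟫ ≤ ⟪u, x j⟫ + τ j * S u := by
    intro u j y hy
    obtain ⟨b, hb, rfl⟩ := hy
    obtain ⟨k, hk, rfl⟩ := hb
    simp only [vadd_eq_add]
    rw [inner_add_right, real_inner_smul_right]
    have := hkMmax u k hk
    nlinarith [(hτ j).le]
  have hylb : ∀ (u : EuclideanSpace ℝ (Fin d)) (j : Fin n) (y : EuclideanSpace ℝ (Fin d)),
      y ∈ x j +ᵥ τ j • K → ⟪u, x j⟫ + τ j * Sm u ≤ ⟪u, y⟫ := by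
    intro u j y hy
    obtain ⟨b, hb, rfl⟩ := hy
    obtain ⟨k, hk, rfl⟩ := hb
    simp only [vadd_eq_add]
    rw [inner_add_right, real_inner_smul_right]
    have := hkmmin u k hk
    nlinarith [(hτ j).le]
  set bfun : EuclideanSpace ℝ (Fin d) → Fin n → ℝ := fun u i => ⟪u, x i⟫ + τ i * S u with hbfun
  -- maximizer
  have hMex : ∀ u : EuclideanSpace ℝ (Fin d), ∃ i0, ∀ i, bfun u i ≤ bfun u i0 := by
    intro u
    obtain ⟨i0, _, hi0⟩ := Finset.exists_max_image Finset.univ (bfun u)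
      ⟨⟨0, by omega⟩, Finset.mem_univ _⟩
    exact ⟨i0, fun i => hi0 i (Finset.mem_univ i)⟩
  choose istar histar using hMex
  -- coverage from non-separability
  have cov : ∀ u : EuclideanSpace ℝ (Fin d), ∀ i (α : ℝ), bfun u i < α → α < bfun u (istar u) →
      ∃ j, α ≤ bfun u j ∧ bfun u j - τ j * (S u - Sm u) ≤ α := by
    intro u i α hiα hαM
    by_contra hno
    push_neg at hno
    refine hns ⟨Finset.univ.filter (fun j => bfun u j < α), u, α, ?_, ?_, ?_, ?_, ?_⟩
    · exact ⟨i, Finset.mem_filter.mpr ⟨Finset.mem_univ _, hiα⟩⟩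
    · intro heq
      have h1 : istar u ∈ Finset.univ.filter (fun j => bfun u j < α) := by
        rw [heq]; exact Finset.mem_univ _
      have h2 := (Finset.mem_filter.mp h1).2
      linarith
    · intro h0
      rw [h0] at hiα hαM
      have hz : ∀ j, bfun 0 j = 0 := by
        intro j
        rw [hbfun]
        dsimp only
        rw [hS]
        dsimp only
        rw [inner_zero_left, inner_zero_left, mul_zero, add_zero]
      rw [hz i] at hiα
      rw [hz (istar 0)] at hαM
      linarith
    · intro j hj y hy
      have h2 := (Finset.mem_filter.mp hj).2
      exact lt_of_le_of_lt (hyub u j y hy) h2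
    · intro j hj y hy
      have h2 : α ≤ bfun u j := by
        by_contra h3
        exact hj (Finset.mem_filter.mpr ⟨Finset.mem_univ _, by linarith⟩)
      have h4 := hno j h2
      have h5 := hylb u j y hy
      have h6 : bfun u j - τ j * (S u - Sm u) = ⟪u, x j⟫ + τ j * Sm u := by
        rw [hbfun]; dsimp only; ring
      linarith
  -- the per-direction inequality
  have hsum : ∀ u : EuclideanSpace ℝ (Fin d),
      T * bfun u (istar u) ≤ (∑ j, τ j * ⟪u, x j⟫) + Q * S u
        + lam * (T^2 - Q) * S u - lam * (T^2 - Q) * ⟪u, c⟫ := by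
    intro u
    have hSSm' : 0 ≤ S u - Sm u := by linarith [hSSm u]
    have hchg := charge (bfun u) (fun j => τ j * (S u - Sm u))
      (fun j => mul_nonneg (hτ j).le hSSm') (bfun u (istar u)) (histar u) (cov u)
    have hps := pairsum (bfun u) τ (fun i => (hτ i).le)
    rw [← hT, ← hQ] at hps
    have e3 : ∑ i, τ i * (bfun u (istar u) - bfun u i) ≤ (S u - Sm u) * ((T^2 - Q)/2) := by
      calc ∑ i, τ i * (bfun u (istar u) - bfun u i)
          ≤ ∑ i, τ i * ((∑ j ∈ Finset.univ.filter (fun j => bfun u i < bfun u j), τ j)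
              * (S u - Sm u)) := by
            refine Finset.sum_le_sum fun i _ => mul_le_mul_of_nonneg_left ?_ (hτ i).le
            exact le_of_le_of_eq (hchg i) (by rw [Finset.sum_mul])
        _ = (S u - Sm u) * ∑ i, τ i *
              (∑ j ∈ Finset.univ.filter (fun j => bfun u i < bfun u j), τ j) := by
            rw [Finset.mul_sum]
            exact Finset.sum_congr rfl fun i _ => by ring
        _ ≤ (S u - Sm u) * ((T^2 - Q)/2) := mul_le_mul_of_nonneg_left hps hSSm'
    have e1 : ∑ i, τ i * (bfun u (istar u) - bfun u i)
        = T * bfun u (istar u) - ∑ i, τ i * bfun u i := by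
      rw [hT, Finset.sum_mul]
      rw [← Finset.sum_sub_distrib]
      exact Finset.sum_congr rfl fun i _ => by ring
    have e2 : ∑ i, τ i * bfun u i = (∑ i, τ i * ⟪u, x i⟫) + Q * S u := by
      rw [hbfun, hQ]
      dsimp only
      rw [Finset.sum_mul, ← Finset.sum_add_distrib]
      exact Finset.sum_congr rfl fun i _ => by ring
    -- (S u - Sm u) ≤ (1+d)(S u - ⟪u,c⟫) = 2 lam (S u - ⟪u,c⟫)
    have e4 : (S u - Sm u) * ((T^2 - Q)/2) ≤ lam * (T^2 - Q) * (S u - ⟪u, c⟫) := by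
      have h1 : S u - Sm u ≤ 2 * lam * (S u - ⟪u, c⟫) := by
        have h0 := mul_le_mul_of_nonneg_right (le_of_eq hdlam)
          (sub_nonneg.mpr (hcle u))
        nlinarith [hcen u, hcle u, hcge u, h0]
      have h2 : (0:ℝ) ≤ (T^2 - Q)/2 := by linarith
      nlinarith [mul_le_mul_of_nonneg_right h1 h2]
    nlinarith [e1, e2, e3, e4]
  -- the covering translate
  set e : ℝ := (lam * T^2 - Q)/T with he
  set z : EuclideanSpace ℝ (Fin d) := T⁻¹ • ∑ i, τ i • x i with hz
  set t : EuclideanSpace ℝ (Fin d) := z - e • c with ht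
  clear_value e z t
  refine ⟨t, ?_⟩
  intro p hp
  obtain ⟨i0, hpi0⟩ := Set.mem_iUnion.mp hp
  -- support bound
  have hsupp : ∀ u : EuclideanSpace ℝ (Fin d), ⟪u, p - t⟫ ≤ lam * T * S u := by
    intro u
    have hub : ⟪u, p⟫ ≤ bfun u (istar u) := le_trans (hyub u i0 p hpi0) (histar u i0)
    have hTz : T * ⟪u, z⟫ = ∑ j, τ j * ⟪u, x j⟫ := by
      rw [hz, real_inner_smul_right, inner_sum]
      have : ∀ j ∈ Finset.univ, ⟪u, τ j • x j⟫ = τ j * ⟪u, x j⟫ :=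
        fun j _ => real_inner_smul_right _ _ _
      rw [Finset.sum_congr rfl this]
      field_simp [hT0.ne']
    have hTe : T * e = lam * T^2 - Q := by
      rw [he]
      field_simp [hT0.ne']
    have hTt : T * ⟪u, t⟫ = T * ⟪u, z⟫ - (lam * T^2 - Q) * ⟪u, c⟫ := by
      calc T * ⟪u, t⟫ = T * (⟪u, z⟫ - e * ⟪u, c⟫) := by
            rw [ht, inner_sub_right, real_inner_smul_right]
        _ = T * ⟪u, z⟫ - (T * e) * ⟪u, c⟫ := by rw [mul_sub, mul_assoc]
        _ = T * ⟪u, z⟫ - (lam * T^2 - Q) * ⟪u, c⟫ := by rw [hTe]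
    have hslack : (lam - 1) * Q * ⟪u, c⟫ ≤ (lam - 1) * Q * S u :=
      mul_le_mul_of_nonneg_left (hcle u) (by nlinarith)
    have key : T * ⟪u, p⟫ ≤ T * ⟪u, t⟫ + lam * T^2 * S u := by
      have b1 : T * ⟪u, p⟫ ≤ T * bfun u (istar u) :=
        mul_le_mul_of_nonneg_left hub hT0.le
      have b2 := hsum u
      rw [hTt, hTz]
      nlinarith [b1, b2, hslack]
    have : ⟪u, p - t⟫ = ⟪u, p⟫ - ⟪u, t⟫ := inner_sub_right _ _ _
    rw [this]
    have h3 : T * (⟪u, p⟫ - ⟪u, t⟫) ≤ T * (lam * T * S u) := by nlinarith [key]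
    exact le_of_mul_le_mul_left h3 hT0
  -- conclude membership
  have hmemv : p ∈ t +ᵥ (lam * T) • K := by
    rw [Set.mem_vadd_set_iff_neg_vadd_mem]
    have harr : -t +ᵥ p = p - t := by rw [vadd_eq_add]; abel
    rw [harr]
    by_contra hout
    have hGconv : Convex ℝ ((lam * T) • K) := hKconv.smul _
    have hGcpt : IsCompact ((lam * T) • K) := by
      rw [← Set.image_smul]
      exact hKcpt.image (continuous_const_smul _)
    obtain ⟨f, β, hfa, hfp⟩ := geometric_hahn_banach_closed_point hGconv hGcpt.isClosed hout
    set v : EuclideanSpace ℝ (Fin d) := (InnerProductSpace.toDual ℝ _).symm f with hv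
    have hfv : ∀ y, f y = ⟪v, y⟫ := by
      intro y
      rw [hv, ← InnerProductSpace.toDual_apply_apply]
      simp
    have h1 : f ((lam * T) • kM v) < β := hfa _ (smul_mem_smul_set (hkMK v))
    rw [hfv] at h1
    rw [real_inner_smul_right] at h1
    have h2 : β < f (p - t) := hfp
    rw [hfv] at h2
    have h3 := hsupp v
    rw [hS] at h3
    dsimp only at h3 h1
    linarith
  exact hmemv

end Main


/-- If `𝒦 = {xᵢ + τᵢ K}` is an NS-family of positive homothets of a convex body
`K` in `ℝ^d` (`d ≥ 2`, `n ≥ 2`), then `⋃ 𝒦` can be covered by a translate of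
`((d+1)/2) (∑ τᵢ) K`. -/
theorem stmt_6 (d n : ℕ) (hd : 2 ≤ d) (hn : 2 ≤ n)
    (K : Set (EuclideanSpace ℝ (Fin d)))
    (hKconv : Convex ℝ K) (hKcpt : IsCompact K) (hKint : (interior K).Nonempty)
    (x : Fin n → EuclideanSpace ℝ (Fin d)) (τ : Fin n → ℝ) (hτ : ∀ i, 0 < τ i)
    (hns : NonSeparableFamily (fun i => x i +ᵥ τ i • K)) :
    ∃ t : EuclideanSpace ℝ (Fin d),
      (⋃ i, x i +ᵥ τ i • K) ⊆ t +ᵥ ((((d : ℝ) + 1) / 2) * ∑ i, τ i) • K := by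
  exact stmt_6_aux hd hn K hKconv hKcpt hKint x τ hτ hns
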